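/- In ℂ⁴ with standard basis e₀, e₁, e₂, e₃, define the orthonormal bases ψ₀ = (e₀+e₁)/√2, ψ₁ = (e₀−e₁)/√2, ψ₂ = (e₂+e₃)/√2, ψ₃ = (e₂−e₃)/√2 and φ₀ = (e₀+e₂)/√2, φ₁ = (e₀−e₂)/√2, φ₂ = (e₁+e₃)/√2, φ₃ = (e₁−e₃)/√2. Then: (1) ⟨ψ_i, φ_j⟩ ≠ 0 for all i, j ∈ {0,1,2,3}; and (2) the coarse-grained projections P_{ψ₀}+P_{ψ₁} and P_{φ₀}+P_{φ₁} commute, so the binary projective measurements obtained by coarse-graining outcomes {0,1} and {2,3} of each measurement are jointly measurable. Hence the nonvanishing of all mutual overlaps is not sufficient for two rank-one projective measurements in dimension ≥ 4 to remain incompatible under all nontrivial coarse-grainings. -/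

import Mathlib

open Matrix Finset
open scoped ComplexOrder

noncomputable section

/-- A `d`-outcome POVM on `ℂ^n`: positive semidefinite effects summing to the identity. -/
def IsPOVM {n d : ℕ} (M : Fin d → Matrix (Fin n) (Fin n) ℂ) : Prop :=
  (∀ z, (M z).PosSemidef) ∧ ∑ z, M z = 1

/-- Coarse-graining of a `d`-outcome POVM along `f : Fin d → Fin k`. -/
def coarseGrain {n d k : ℕ} (M : Fin d → Matrix (Fin n) (Fin n) ℂ) (f : Fin d → Fin k)
    (z' : Fin k) : Matrix (Fin n) (Fin n) ℂ :=
  ∑ z ∈ Finset.univ.filter (fun z => f z = z'), M z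

/-- Compatibility of a finite family of `d`-outcome POVMs: existence of a parent POVM
`G` together with classical post-processings `p`. -/
def Compatible {n m d : ℕ} (M : Fin m → Fin d → Matrix (Fin n) (Fin n) ℂ) : Prop :=
  ∃ (L : ℕ) (G : Fin L → Matrix (Fin n) (Fin n) ℂ) (p : Fin m → Fin d → Fin L → ℝ),
    (∀ l, (G l).PosSemidef) ∧ (∑ l, G l = 1) ∧
    (∀ x z l, 0 ≤ p x z l) ∧ (∀ x l, ∑ z, p x z l = 1) ∧
    (∀ x z, M x z = ∑ l, (p x z l : ℂ) • G l)

/-- Joint measurability of two POVMs via a joint parent POVM with marginals `A` and `B`. -/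
def JointlyMeasurable {n a b : ℕ} (A : Fin a → Matrix (Fin n) (Fin n) ℂ)
    (B : Fin b → Matrix (Fin n) (Fin n) ℂ) : Prop :=
  ∃ G : Fin a → Fin b → Matrix (Fin n) (Fin n) ℂ,
    (∀ i j, (G i j).PosSemidef) ∧ (∑ i, ∑ j, G i j = 1) ∧
    (∀ i, A i = ∑ j, G i j) ∧ (∀ j, B j = ∑ i, G i j)

/-- `1/√2` as a complex number. -/
def invSqrt2 : ℂ := ((Real.sqrt 2 : ℝ) : ℂ)⁻¹

/-- The basis `ψ₀ = (e₀+e₁)/√2, ψ₁ = (e₀−e₁)/√2, ψ₂ = (e₂+e₃)/√2, ψ₃ = (e₂−e₃)/√2` of `ℂ⁴`. -/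
def ψ : Fin 4 → Fin 4 → ℂ :=
  ![![invSqrt2, invSqrt2, 0, 0], ![invSqrt2, -invSqrt2, 0, 0],
    ![0, 0, invSqrt2, invSqrt2], ![0, 0, invSqrt2, -invSqrt2]]

/-- The basis `φ₀ = (e₀+e₂)/√2, φ₁ = (e₀−e₂)/√2, φ₂ = (e₁+e₃)/√2, φ₃ = (e₁−e₃)/√2` of `ℂ⁴`. -/
def φ : Fin 4 → Fin 4 → ℂ :=
  ![![invSqrt2, 0, invSqrt2, 0], ![invSqrt2, 0, -invSqrt2, 0],
    ![0, invSqrt2, 0, invSqrt2], ![0, invSqrt2, 0, -invSqrt2]]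

/-- Rank-one projection onto a vector. -/
def proj (u : Fin 4 → ℂ) : Matrix (Fin 4) (Fin 4) ℂ := vecMulVec u (star u)

lemma star_invSqrt2 : star invSqrt2 = invSqrt2 := by
  simp [invSqrt2, Complex.star_def, ← Complex.ofReal_inv]

lemma mul_self_invSqrt2 : invSqrt2 * invSqrt2 = 1/2 := by
  rw [invSqrt2, ← mul_inv]; norm_cast
  rw [Real.mul_self_sqrt (by norm_num)]; norm_num

lemma invSqrt2_ne_zero : invSqrt2 ≠ 0 := by simp [invSqrt2]

lemma sum_psi01 : proj (ψ 0) + proj (ψ 1) = Matrix.diagonal ![1,1,0,0] := by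
  ext i j
  simp only [Matrix.add_apply, proj, vecMulVec_apply]
  fin_cases i <;> fin_cases j <;>
    simp [proj, ψ, vecMulVec_apply, star_invSqrt2, Matrix.diagonal,
      Matrix.vecHead, Matrix.vecTail] <;>
    first
    | linear_combination (2:ℂ) * mul_self_invSqrt2
    | linear_combination (-2:ℂ) * mul_self_invSqrt2
    | ring

lemma sum_psi23 : proj (ψ 2) + proj (ψ 3) = Matrix.diagonal ![0,0,1,1] := by
  ext i j
  simp only [Matrix.add_apply, proj, vecMulVec_apply]
  fin_cases i <;> fin_cases j <;>
    simp [proj, ψ, vecMulVec_apply, star_invSqrt2, Matrix.diagonal,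
      Matrix.vecHead, Matrix.vecTail] <;>
    first
    | linear_combination (2:ℂ) * mul_self_invSqrt2
    | linear_combination (-2:ℂ) * mul_self_invSqrt2
    | ring

lemma sum_phi01 : proj (φ 0) + proj (φ 1) = Matrix.diagonal ![1,0,1,0] := by
  ext i j
  simp only [Matrix.add_apply, proj, vecMulVec_apply]
  fin_cases i <;> fin_cases j <;>
    simp [proj, φ, vecMulVec_apply, star_invSqrt2, Matrix.diagonal,
      Matrix.vecHead, Matrix.vecTail] <;>
    first
    | linear_combination (2:ℂ) * mul_self_invSqrt2
    | linear_combination (-2:ℂ) * mul_self_invSqrt2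
    | ring

lemma sum_phi23 : proj (φ 2) + proj (φ 3) = Matrix.diagonal ![0,1,0,1] := by
  ext i j
  simp only [Matrix.add_apply, proj, vecMulVec_apply]
  fin_cases i <;> fin_cases j <;>
    simp [proj, φ, vecMulVec_apply, star_invSqrt2, Matrix.diagonal,
      Matrix.vecHead, Matrix.vecTail] <;>
    first
    | linear_combination (2:ℂ) * mul_self_invSqrt2
    | linear_combination (-2:ℂ) * mul_self_invSqrt2
    | ring

/-- The parent POVM effects: diagonal 0/1 matrices. -/
def dvec : Fin 2 → Fin 2 → Fin 4 → ℂ :=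
  ![![![1,0,0,0], ![0,1,0,0]], ![![0,0,1,0], ![0,0,0,1]]]

set_option maxHeartbeats 1000000 in
theorem overlaps_nonzero_not_sufficient_dim_four :
    (∀ i j : Fin 4, star (ψ i) ⬝ᵥ φ j ≠ 0) ∧
    ((proj (ψ 0) + proj (ψ 1)) * (proj (φ 0) + proj (φ 1))
      = (proj (φ 0) + proj (φ 1)) * (proj (ψ 0) + proj (ψ 1))) ∧
    JointlyMeasurable
      ![proj (ψ 0) + proj (ψ 1), proj (ψ 2) + proj (ψ 3)]
      ![proj (φ 0) + proj (φ 1), proj (φ 2) + proj (φ 3)] := by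
  refine ⟨?_, ?_, ?_⟩
  · intro i j
    fin_cases i <;> fin_cases j <;>
      simp [ψ, φ, dotProduct, Fin.sum_univ_four, star_invSqrt2, Matrix.vecHead,
        Matrix.vecTail, invSqrt2_ne_zero]
  · rw [sum_psi01, sum_phi01, Matrix.diagonal_mul_diagonal, Matrix.diagonal_mul_diagonal]
    exact congrArg _ (funext fun k => mul_comm _ _)
  · refine ⟨fun i j => Matrix.diagonal (dvec i j), ?_, ?_, ?_, ?_⟩
    · intro i j
      rw [Matrix.posSemidef_diagonal_iff]
      intro k
      fin_cases i <;> fin_cases j <;> fin_cases k <;>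
        simp [dvec, Matrix.vecHead, Matrix.vecTail]
    · ext i j
      fin_cases i <;> fin_cases j <;>
        simp [dvec, Fin.sum_univ_two, Matrix.diagonal, Matrix.one_apply,
          Matrix.vecHead, Matrix.vecTail]
    · intro i
      fin_cases i <;>
        simp only [Fin.sum_univ_two, Matrix.cons_val_zero, Matrix.cons_val_one,
          Matrix.head_cons, Fin.isValue] <;>
        [rw [sum_psi01]; rw [sum_psi23]] <;>
        · ext k l
          fin_cases k <;> fin_cases l <;>
            simp [dvec, Matrix.diagonal, Matrix.vecHead, Matrix.vecTail]
    · intro j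
      fin_cases j <;>
        simp only [Fin.sum_univ_two, Matrix.cons_val_zero, Matrix.cons_val_one,
          Matrix.head_cons, Fin.isValue] <;>
        [rw [sum_phi01]; rw [sum_phi23]] <;>
        · ext k l
          fin_cases k <;> fin_cases l <;>
            simp [dvec, Matrix.diagonal, Matrix.vecHead, Matrix.vecTail]
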